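/- Let N ≥ 1 be an integer, ρ ≥ 0 a real number, F ∈ ℝ^N, and λ > 0. Then for every p ∈ P_{ρ,N}, Σ_{i=1}^N p_i·F_i ≤ λ·ρ + λ·log( (1/N)·Σ_{i=1}^N exp(F_i/λ) ). Consequently, sup_{p ∈ P_{ρ,N}} Σ_{i=1}^N p_i·F_i ≤ inf_{λ > 0} [ λ·ρ + λ·log( (1/N)·Σ_{i=1}^N exp(F_i/λ) ) ]. -/
import Mathlib


/-- The constraint set `P_{ρ,N}`: probability vectors on `{1,…,N}` whose KL divergence
from the uniform vector is at most `ρ` (convention `0 · log 0 = 0` is automatic since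
`Real.log 0 = 0`). -/
def Pset (N : ℕ) (ρ : ℝ) : Set (Fin N → ℝ) :=
  {p | (∀ i, 0 ≤ p i) ∧ ∑ i, p i = 1 ∧ ∑ i, p i * Real.log (N * p i) ≤ ρ}

/-- Fenchel-type inequality: `a * c ≤ a log a - a + exp c` for `a ≥ 0`. -/
lemma fenchel_exp (a c : ℝ) (ha : 0 ≤ a) : a * c ≤ a * Real.log a - a + Real.exp c := by
  rcases ha.eq_or_lt with h | h
  · simp only [← h, zero_mul, sub_zero, zero_add]
    positivity
  · have ht := Real.add_one_le_exp (c - Real.log a)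
    rw [Real.exp_sub, Real.exp_log h] at ht
    have h2 := (le_div_iff₀ h).mp ht
    nlinarith

/-- Donsker–Varadhan-type bound: for every `p ∈ P_{ρ,N}` and every `λ > 0`,
`∑ p i F i ≤ λ ρ + λ log ((1/N) ∑ exp (F i / λ))`; consequently the supremum of the
linear objective over `P_{ρ,N}` is at most the infimum over `λ > 0` of the right-hand side. -/
theorem weighted_sum_le_logSumExp (N : ℕ) (hN : 1 ≤ N) (ρ : ℝ) (hρ : 0 ≤ ρ)
    (F : Fin N → ℝ) :
    (∀ p ∈ Pset N ρ, ∀ l : ℝ, 0 < l →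
        ∑ i, p i * F i ≤ l * ρ + l * Real.log ((N : ℝ)⁻¹ * ∑ i, Real.exp (F i / l))) ∧
      sSup ((fun p : Fin N → ℝ => ∑ i, p i * F i) '' Pset N ρ) ≤
        ⨅ l : {l : ℝ // 0 < l},
          (l : ℝ) * ρ + (l : ℝ) * Real.log ((N : ℝ)⁻¹ * ∑ i, Real.exp (F i / l)) := by
  have hNpos : (0:ℝ) < N := by exact_mod_cast Nat.lt_of_lt_of_le Nat.zero_lt_one hN
  haveI : Nonempty (Fin N) := ⟨⟨0, hN⟩⟩
  have key : ∀ p ∈ Pset N ρ, ∀ l : ℝ, 0 < l →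
      ∑ i, p i * F i ≤ l * ρ + l * Real.log ((N : ℝ)⁻¹ * ∑ i, Real.exp (F i / l)) := by
    rintro p ⟨hpos, hsum, hKL⟩ l hl
    set Z := ∑ i, Real.exp (F i / l) with hZ
    have hZpos : 0 < Z :=
      Finset.sum_pos (fun i _ => Real.exp_pos _) Finset.univ_nonempty
    have step : ∑ i, p i * (F i / l - Real.log Z) ≤ ∑ i, p i * Real.log (p i) := by
      calc ∑ i, p i * (F i / l - Real.log Z)
          ≤ ∑ i, (p i * Real.log (p i) - p i + Real.exp (F i / l - Real.log Z)) :=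
            Finset.sum_le_sum (fun i _ => fenchel_exp _ _ (hpos i))
        _ = ∑ i, p i * Real.log (p i) := by
            have hexp : ∑ i, Real.exp (F i / l - Real.log Z) = 1 := by
              simp only [Real.exp_sub, Real.exp_log hZpos]
              rw [← Finset.sum_div, ← hZ]
              exact div_self hZpos.ne'
            rw [Finset.sum_add_distrib, Finset.sum_sub_distrib, hsum, hexp]
            ring
    have hlog : ∑ i, p i * Real.log (p i) = ∑ i, p i * Real.log (N * p i) - Real.log N := by
      have h1 : ∀ i, p i * Real.log (N * p i) = p i * Real.log N + p i * Real.log (p i) := by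
        intro i
        rcases (hpos i).eq_or_lt with h | h
        · simp [← h]
        · rw [Real.log_mul hNpos.ne' h.ne']; ring
      rw [Finset.sum_congr rfl (fun i _ => h1 i), Finset.sum_add_distrib, ← Finset.sum_mul, hsum]
      ring
    have expand : ∑ i, p i * (F i / l - Real.log Z)
        = (∑ i, p i * F i) / l - Real.log Z := by
      simp only [mul_sub]
      rw [Finset.sum_sub_distrib, ← Finset.sum_mul, hsum, one_mul, Finset.sum_div]
      congr 1
      exact Finset.sum_congr rfl (fun i _ => by ring)
    have hlog2 : Real.log ((N:ℝ)⁻¹ * Z) = Real.log Z - Real.log N := by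
      rw [Real.log_mul (by positivity) hZpos.ne', Real.log_inv]
      ring
    have hfinal : (∑ i, p i * F i) / l ≤ ρ + Real.log Z - Real.log N := by
      rw [expand] at step
      linarith
    rw [hlog2]
    calc ∑ i, p i * F i ≤ (ρ + Real.log Z - Real.log N) * l := (div_le_iff₀ hl).mp hfinal
      _ = l * ρ + l * (Real.log Z - Real.log N) := by ring
  refine ⟨key, ?_⟩
  have hu : (fun _ : Fin N => (N:ℝ)⁻¹) ∈ Pset N ρ := by
    refine ⟨fun i => by positivity, ?_, ?_⟩
    · rw [Finset.sum_const, Finset.card_fin, nsmul_eq_mul, mul_inv_cancel₀ hNpos.ne']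
    · simp [mul_inv_cancel₀ hNpos.ne', hρ]
  haveI : Nonempty {l : ℝ // 0 < l} := ⟨⟨1, one_pos⟩⟩
  apply le_ciInf
  intro l
  apply csSup_le ⟨_, Set.mem_image_of_mem _ hu⟩
  rintro x ⟨p, hp, rfl⟩
  exact key p hp l l.2
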